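/- Suppose that for every atom A whose arguments are elements of the domain D there exists a query Q with Set(Q) = {A}. Then every filter Δ that is DN for a clause r is also DNlog for r. -/

import Mathlib

/- A semantic formalization of CLP(X) queries, clauses, derivation steps,
   filters and derivation-neutrality, following Payet & Mesnard. -/

namespace CLP

variable {V D Pr : Type}

/-- A (semantic) term: its evaluation under every valuation. -/
abbrev Trm (V D : Type) := (V → D) → D
/-- A (semantic) constraint: its truth value under every valuation. -/
abbrev Cns (V D : Type) := (V → D) → Prop

/-- The term consisting of a single variable. -/
def varT (x : V) : Trm V D := fun v => v x

/-- An atom whose arguments are domain elements. -/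
structure Atom (D Pr : Type) where
  pred : Pr
  args : List D

/-- A query ⟨p(t̃) | d⟩. -/
structure Query (V D Pr : Type) where
  pred : Pr
  args : List (Trm V D)
  constr : Cns V D

/-- The set of atoms described by a query: Set(⟨p(t̃) | d⟩) = {p([t̃]_v) | D ⊨_v d}. -/
def Query.descSet (Q : Query V D Pr) : Set (Atom D Pr) :=
  { A | ∃ v : V → D, Q.constr v ∧ A = ⟨Q.pred, Q.args.map (fun t => t v)⟩ }

/-- Applying a renaming (a bijection on variables) to a query. -/
def Query.rename (γ : V ≃ V) (Q : Query V D Pr) : Query V D Pr :=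
  ⟨Q.pred, Q.args.map (fun t v => t (v ∘ γ)), fun v => Q.constr (v ∘ γ)⟩

/-- A term only depends on (is supported by) the variables in `S`. -/
def Trm.supp (t : Trm V D) (S : Set V) : Prop :=
  ∀ v w : V → D, (∀ x ∈ S, v x = w x) → t v = t w

/-- A constraint only depends on (is supported by) the variables in `S`. -/
def Cns.supp (c : Cns V D) (S : Set V) : Prop :=
  ∀ v w : V → D, (∀ x ∈ S, v x = w x) → (c v ↔ c w)

/-- All the variables of the query lie in `S`. -/
def Query.suppBy (Q : Query V D Pr) (S : Set V) : Prop :=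
  (∀ t ∈ Q.args, Trm.supp t S) ∧ Cns.supp Q.constr S

/-- The query has finitely many variables (as every syntactic query does). -/
def Query.finSupp (Q : Query V D Pr) : Prop := ∃ S : Finset V, Q.suppBy ↑S

/-- The constraint s̃ = t̃ (componentwise equality of two sequences of terms). -/
def EqArgs (a b : List (Trm V D)) (v : V → D) : Prop :=
  a.length = b.length ∧ ∀ pr ∈ a.zip b, pr.1 v = pr.2 v

/-- A binary clause H ← c ◇ B. -/
structure Clause (V D Pr : Type) where
  hpred : Pr
  hargs : List (Trm V D)
  constr : Cns V D
  bpred : Pr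
  bargs : List (Trm V D)

/-- The query ⟨H | c⟩. -/
def Clause.headQuery (r : Clause V D Pr) : Query V D Pr := ⟨r.hpred, r.hargs, r.constr⟩
/-- The query ⟨B | c⟩. -/
def Clause.bodyQuery (r : Clause V D Pr) : Query V D Pr := ⟨r.bpred, r.bargs, r.constr⟩

/-- Applying a renaming to a clause (producing a variant of the clause). -/
def Clause.rename (γ : V ≃ V) (r : Clause V D Pr) : Clause V D Pr :=
  ⟨r.hpred, r.hargs.map (fun t v => t (v ∘ γ)), fun v => r.constr (v ∘ γ),
   r.bpred, r.bargs.map (fun t v => t (v ∘ γ))⟩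

/-- All the variables of the clause lie in `S`. -/
def Clause.suppBy (r : Clause V D Pr) (S : Set V) : Prop :=
  (∀ t ∈ r.hargs ++ r.bargs, Trm.supp t S) ∧ Cns.supp r.constr S

/-- The clause has finitely many variables. -/
def Clause.finSupp (r : Clause V D Pr) : Prop := ∃ S : Finset V, r.suppBy ↑S

/-- The constraint s̃ = ũ ∧ c ∧ d of the derived query, where the input clause is
    r' = p(s̃) ← c ◇ q(t̃) and the current query is Q = ⟨p(ũ) | d⟩. -/
def stepCns (r' : Clause V D Pr) (Q : Query V D Pr) : Cns V D :=
  fun v => EqArgs r'.hargs Q.args v ∧ r'.constr v ∧ Q.constr v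

/-- A derivation step Q ⟹_r Q₁: there is a variant r' of r variable-disjoint from Q
    (the input clause) such that the constraint s̃ = ũ ∧ c ∧ d is satisfiable, and
    Q₁ = ⟨q(t̃) | s̃ = ũ ∧ c ∧ d⟩. -/
def Step (r : Clause V D Pr) (Q Q₁ : Query V D Pr) : Prop :=
  ∃ γ : V ≃ V, ∃ S S' : Set V,
    Q.suppBy S ∧ (r.rename γ).suppBy S' ∧ Disjoint S S' ∧
    Q.pred = r.hpred ∧
    (∃ v, stepCns (r.rename γ) Q v) ∧
    Q₁ = ⟨(r.rename γ).bpred, (r.rename γ).bargs, stepCns (r.rename γ) Q⟩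

/-- Q₀ loops w.r.t. the program `Prog`: there is an infinite derivation of Prog ∪ {Q₀}. -/
def Loops (Prog : Set (Clause V D Pr)) (Q₀ : Query V D Pr) : Prop :=
  ∃ Qs : ℕ → Query V D Pr, Qs 0 = Q₀ ∧ ∀ n, ∃ r ∈ Prog, Step r (Qs n) (Qs (n + 1))

/-- Projection of a sequence onto a set of (0-based) positions, in increasing order. -/
def projArgs {α : Type} (s : Finset ℕ) (l : List α) : List α :=
  ((s.filter (· < l.length)).sort (· ≤ ·)).filterMap (fun i => l[i]?)

/-- Projection of a query on a set of positions τ. -/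
def Query.proj (τ : Pr → Finset ℕ) (Q : Query V D Pr) : Query V D Pr :=
  ⟨Q.pred, projArgs (τ Q.pred) Q.args, Q.constr⟩

/-- Projection of a query on the complementary set of positions τ̄. -/
def Query.coproj (τ : Pr → Finset ℕ) (Q : Query V D Pr) : Query V D Pr :=
  ⟨Q.pred, projArgs (Finset.range Q.args.length \ τ Q.pred) Q.args, Q.constr⟩

/-- A filter Δ = (τ, δ): a set of positions together with, for each predicate,
    a query over the projected predicate whose constraint is satisfiable. -/
structure PFilter (V D Pr : Type) where
  pos : Pr → Finset ℕ
  delta : Pr → Query V D Pr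
  delta_pred : ∀ p, (delta p).pred = p
  delta_sat : ∀ p, ∃ v, (delta p).constr v

/-- Q satisfies Δ when Set(Q|_τ) ⊆ Set(δ(rel(Q))). -/
def PFilter.Satisfies (Δ : PFilter V D Pr) (Q : Query V D Pr) : Prop :=
  (Q.proj Δ.pos).descSet ⊆ (Δ.delta Q.pred).descSet

/-- Q' is Δ-more general than Q. -/
def PFilter.MoreGen (Δ : PFilter V D Pr) (Q' Q : Query V D Pr) : Prop :=
  (Q.coproj Δ.pos).descSet ⊆ (Q'.coproj Δ.pos).descSet ∧ Δ.Satisfies Q'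

/-- Δ is derivation neutral (DN) for the clause r. -/
def PFilter.DN (Δ : PFilter V D Pr) (r : Clause V D Pr) : Prop :=
  ∀ Q Q₁ : Query V D Pr, Q.finSupp → Step r Q Q₁ →
    Δ.Satisfies Q₁ ∧
    ∀ Q' : Query V D Pr, Q'.finSupp → Δ.MoreGen Q' Q →
      ∃ Q₁', Step r Q' Q₁' ∧ Δ.MoreGen Q₁' Q₁

/-- sat(ũ, Q): taking a fresh variant of Q and existentially quantifying its variables,
    the values of ũ can be matched with the arguments of Q while its constraint holds. -/
def satC (us : List (Trm V D)) (Q : Query V D Pr) : Cns V D :=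
  fun v => ∃ w : V → D, us.length = Q.args.length ∧
    (∀ pr ∈ us.zip Q.args, pr.1 v = pr.2 w) ∧ Q.constr w

/-- First DNlog condition: D ⊨ c → ∀_{X̃|τ(p)} [sat(X̃|τ(p), δ(p)) → ∃_𝒴 c],
    with 𝒴 = Ỹ|τ(q) ∪ local_vars(r). -/
def DNlog1 (Δ : PFilter V D Pr) (p q : Pr) (Xs Ys : List V) (L : Set V) (c : Cns V D) : Prop :=
  ∀ v : V → D, c v →
    ∀ v' : V → D, (∀ x : V, x ∉ projArgs (Δ.pos p) Xs → v' x = v x) →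
      satC ((projArgs (Δ.pos p) Xs).map varT) (Δ.delta p) v' →
      ∃ w : V → D, (∀ x : V, x ∉ projArgs (Δ.pos q) Ys → x ∉ L → w x = v' x) ∧ c w

/-- Second DNlog condition: D ⊨ c → sat(Ỹ|τ(q), δ(q)). -/
def DNlog2 (Δ : PFilter V D Pr) (q : Pr) (Ys : List V) (c : Cns V D) : Prop :=
  ∀ v : V → D, c v → satC ((projArgs (Δ.pos q) Ys).map varT) (Δ.delta q) v

/-- Δ is DNlog for the clause p(X̃) ← c ◇ q(Ỹ) with local variables L. -/
def DNlog (Δ : PFilter V D Pr) (p q : Pr) (Xs Ys : List V) (L : Set V) (c : Cns V D) : Prop :=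
  DNlog1 Δ p q Xs Ys L c ∧ DNlog2 Δ q Ys c

end CLP

namespace CLP

variable {D Pr : Type}

lemma projArgs_map {α β : Type} (f : α → β) (s : Finset ℕ) (l : List α) :
    projArgs s (l.map f) = (projArgs s l).map f := by
  unfold projArgs
  rw [List.length_map, List.map_filterMap]
  congr 1
  funext i
  simp [List.getElem?_map]

lemma mem_projArgs {α : Type} {s : Finset ℕ} {l : List α} {a : α} :
    a ∈ projArgs s l ↔ ∃ i ∈ s, ∃ h : i < l.length, l[i] = a := by
  unfold projArgs
  simp only [List.mem_filterMap, Finset.mem_sort, Finset.mem_filter, List.getElem?_eq_some_iff]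
  constructor
  · rintro ⟨i, ⟨hi, hlt⟩, h⟩; exact ⟨i, hi, h⟩
  · rintro ⟨i, hi, hlt, h⟩; exact ⟨i, ⟨hi, hlt⟩, hlt, h⟩

lemma mem_of_mem_projArgs {α : Type} {s : Finset ℕ} {l : List α} {a : α}
    (h : a ∈ projArgs s l) : a ∈ l := by
  obtain ⟨i, _, hlt, hi⟩ := mem_projArgs.1 h
  exact hi ▸ List.getElem_mem hlt

lemma map_congr_of_eq {α β : Type} {f g : α → β} {l : List α} (h : l.map f = l.map g) :
    ∀ a ∈ l, f a = g a := by
  induction l with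
  | nil => simp
  | cons x xs ih =>
    simp only [List.map_cons, List.cons.injEq] at h
    simpa using And.intro h.1 (ih h.2)

lemma map_eq_of_zip {α β γ : Type} {f : α → γ} {g : β → γ} {l₁ : List α} {l₂ : List β}
    (h : l₁.length = l₂.length) (h2 : ∀ pr ∈ l₁.zip l₂, f pr.1 = g pr.2) :
    l₁.map f = l₂.map g := by
  apply List.ext_getElem (by simpa using h)
  intro i h1 h2'
  simp only [List.getElem_map]
  have hm : (l₁[i]'(by simpa using h1), l₂[i]'(by simpa using h2')) ∈ l₁.zip l₂ := by
    have : i < (l₁.zip l₂).length := by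
      simp only [List.length_map] at h1 h2'
      simp only [List.length_zip]; omega
    have := List.getElem_mem this
    rwa [List.getElem_zip] at this
  exact h2 _ hm

lemma zip_of_map_eq {α β γ : Type} {f : α → γ} {g : β → γ} {l₁ : List α} {l₂ : List β}
    (h : l₁.map f = l₂.map g) : ∀ pr ∈ l₁.zip l₂, f pr.1 = g pr.2 := by
  intro pr hpr
  obtain ⟨i, hi, hget⟩ := List.mem_iff_getElem.1 hpr
  rw [List.getElem_zip] at hget
  subst hget
  have h1 : i < l₁.length := by simp at hi; omega
  have h2 : i < l₂.length := by simp at hi; omega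
  have := congrArg (fun l => l[i]?) h
  simpa [List.getElem?_map, List.getElem?_eq_getElem, h1, h2] using this

/-- The ground query with constant arguments `v x` for `x ∈ xs` and constraint True. -/
def constQ (pp : Pr) (xs : List ℕ) (v : ℕ → D) : Query ℕ D Pr :=
  ⟨pp, xs.map (fun x _ => v x), fun _ => True⟩

lemma constQ_suppBy (pp : Pr) (xs : List ℕ) (v : ℕ → D) :
    (constQ pp xs v).suppBy (↑(∅ : Finset ℕ) : Set ℕ) := by
  constructor
  · intro t ht u w _
    obtain ⟨x, _, rfl⟩ := List.mem_map.1 ht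
    rfl
  · intro u w _
    exact Iff.rfl

lemma constQ_finSupp (pp : Pr) (xs : List ℕ) (v : ℕ → D) :
    (constQ pp xs v).finSupp := ⟨∅, constQ_suppBy pp xs v⟩

lemma suppBy_univ (r' : Clause ℕ D Pr) : r'.suppBy Set.univ := by
  constructor
  · intro t _ u w h
    have : u = w := funext fun x => h x trivial
    rw [this]
  · intro u w h
    have : u = w := funext fun x => h x trivial
    rw [this]

lemma clause_rename_refl (r : Clause ℕ D Pr) : r.rename (Equiv.refl ℕ) = r := by
  show Clause.mk r.hpred (r.hargs.map (fun t => t)) r.constr r.bpred (r.bargs.map (fun t => t)) = r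
  simp [List.map_id']

lemma stepCns_const_self {p q : Pr} {Xs Ys : List ℕ} {c : Cns ℕ D} (v : ℕ → D) (hc : c v) :
    stepCns (⟨p, Xs.map varT, c, q, Ys.map varT⟩ : Clause ℕ D Pr) (constQ p Xs v) v := by
  refine ⟨⟨by simp [constQ], ?_⟩, hc, trivial⟩
  intro pr hpr
  rw [show (⟨p, Xs.map varT, c, q, Ys.map varT⟩ : Clause ℕ D Pr).hargs = Xs.map varT from rfl] at hpr
  rw [show (constQ p Xs v).args = Xs.map (fun x (_ : ℕ → D) => v x) from rfl] at hpr
  rw [List.zip_map'] at hpr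
  obtain ⟨x, _, rfl⟩ := List.mem_map.1 hpr
  rfl

lemma step_const {p q : Pr} {Xs Ys : List ℕ} {c : Cns ℕ D} (v : ℕ → D) (hc : c v) :
    Step (⟨p, Xs.map varT, c, q, Ys.map varT⟩ : Clause ℕ D Pr) (constQ p Xs v)
      ⟨q, Ys.map varT,
        stepCns (⟨p, Xs.map varT, c, q, Ys.map varT⟩ : Clause ℕ D Pr) (constQ p Xs v)⟩ := by
  set r : Clause ℕ D Pr := ⟨p, Xs.map varT, c, q, Ys.map varT⟩ with hr
  refine ⟨Equiv.refl ℕ, (↑(∅ : Finset ℕ) : Set ℕ), Set.univ, constQ_suppBy p Xs v,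
    suppBy_univ _, by simp, rfl, ⟨v, ?_⟩, ?_⟩
  · rw [clause_rename_refl]
    exact stepCns_const_self v hc
  · rw [clause_rename_refl]

end CLP

theorem dn_implies_dnlog {D Pr : Type} (Δ : CLP.PFilter ℕ D Pr) (p q : Pr)
    (Xs Ys : List ℕ) (L : Finset ℕ) (c : CLP.Cns ℕ D)
    (hnodup : (Xs ++ Ys).Nodup)
    (hL : ∀ x ∈ L, x ∉ Xs ∧ x ∉ Ys)
    (hsupp : CLP.Cns.supp c (↑Xs.toFinset ∪ ↑Ys.toFinset ∪ ↑L : Set ℕ))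
    (r : CLP.Clause ℕ D Pr)
    (hr : r = ⟨p, Xs.map CLP.varT, c, q, Ys.map CLP.varT⟩)
    (hatoms : ∀ A : CLP.Atom D Pr, ∃ Q : CLP.Query ℕ D Pr, Q.finSupp ∧ Q.descSet = {A})
    (hdn : Δ.DN r) :
    CLP.DNlog Δ p q Xs Ys (↑L) c := by
  classical
  subst hr
  set r : CLP.Clause ℕ D Pr := ⟨p, Xs.map CLP.varT, c, q, Ys.map CLP.varT⟩ with hr
  obtain ⟨hXnd, hYnd, hXYdis⟩ := List.nodup_append.1 hnodup
  -- the produced query of the canonical step from the ground query at valuation v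
  have hstep : ∀ v : ℕ → D, c v →
      CLP.Step r (CLP.constQ p Xs v) ⟨q, Ys.map CLP.varT, CLP.stepCns r (CLP.constQ p Xs v)⟩ :=
    fun v hc => CLP.step_const v hc
  constructor
  · -- DNlog1
    intro v hcv v' hv' hsat
    have H := hdn _ _ (CLP.constQ_finSupp p Xs v) (hstep v hcv)
    -- Q' := constQ p Xs v' is Δ-more general than Q := constQ p Xs v
    have hmg : Δ.MoreGen (CLP.constQ p Xs v') (CLP.constQ p Xs v) := by
      constructor
      · rintro A ⟨u, -, rfl⟩
        refine ⟨u, trivial, ?_⟩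
        simp only [CLP.Query.coproj, CLP.constQ, List.length_map, CLP.projArgs_map,
          List.map_map]
        congr 1
        apply List.map_congr_left
        intro x hx
        obtain ⟨i, hiS, hlt, rfl⟩ := CLP.mem_projArgs.1 hx
        simp only [Finset.mem_sdiff, Finset.mem_range] at hiS
        have hnotin : Xs[i] ∉ CLP.projArgs (Δ.pos p) Xs := by
          intro hmem
          obtain ⟨j, hj, hlt', hje⟩ := CLP.mem_projArgs.1 hmem
          have : j = i := (List.Nodup.getElem_inj_iff hXnd).1 hje
          exact hiS.2 (this ▸ hj)
        exact (hv' _ hnotin).symm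
      · rintro A ⟨u, -, rfl⟩
        obtain ⟨w, hlen, hzip, hwc⟩ := hsat
        refine ⟨w, hwc, ?_⟩
        have hmaps : ((CLP.projArgs (Δ.pos p) Xs).map CLP.varT).map (fun t => t v')
            = (Δ.delta p).args.map (fun t => t w) := CLP.map_eq_of_zip hlen hzip
        rw [List.map_map] at hmaps
        simp only [CLP.Query.proj, CLP.constQ, CLP.projArgs_map, List.map_map]
        rw [(Δ.delta_pred p)]
        congr 1
    obtain ⟨Q₁', hstep', hmg'⟩ := H.2 _ (CLP.constQ_finSupp p Xs v') hmg
    obtain ⟨γ, S, S', hQs, hRs, hdisj, hpred, -, hQ₁'eq⟩ := hstep'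
    subst hQ₁'eq
    -- the atom of the co-projection of Q₁ at v
    have hconstr : CLP.stepCns r (CLP.constQ p Xs v) v := CLP.stepCns_const_self v hcv
    have hA₁ : (⟨q, (CLP.projArgs (Finset.range Ys.length \ Δ.pos q) Ys).map v⟩ : CLP.Atom D Pr)
        ∈ ((⟨q, Ys.map CLP.varT, CLP.stepCns r (CLP.constQ p Xs v)⟩ :
            CLP.Query ℕ D Pr).coproj Δ.pos).descSet := by
      refine ⟨v, hconstr, ?_⟩
      simp only [CLP.Query.coproj, List.length_map, CLP.projArgs_map, List.map_map]
      rfl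
    have hA₁' := hmg'.1 hA₁
    obtain ⟨u, hu, hAeq⟩ := hA₁'
    -- analyze the membership equation
    have hbargs : (r.rename γ).bargs = Ys.map (fun y (w : ℕ → D) => w (γ y)) := by
      rw [hr]
      show (Ys.map CLP.varT).map (fun t w => t (w ∘ γ)) = _
      rw [List.map_map]
      rfl
    rw [show ((⟨(r.rename γ).bpred, (r.rename γ).bargs,
        CLP.stepCns (r.rename γ) (CLP.constQ p Xs v')⟩ : CLP.Query ℕ D Pr).coproj Δ.pos)
        = ⟨(r.rename γ).bpred,
            CLP.projArgs (Finset.range (r.rename γ).bargs.length \ Δ.pos (r.rename γ).bpred)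
              (r.rename γ).bargs,
            CLP.stepCns (r.rename γ) (CLP.constQ p Xs v')⟩ from rfl] at hAeq
    have hbq : (r.rename γ).bpred = q := by rw [hr]; rfl
    rw [hbq, hbargs] at hAeq
    rw [show (Ys.map (fun y (w : ℕ → D) => w (γ y))).length = Ys.length from by simp] at hAeq
    rw [CLP.projArgs_map, List.map_map] at hAeq
    have hargsEq := congrArg CLP.Atom.args hAeq
    simp only at hargsEq
    have hstar : ∀ y ∈ CLP.projArgs (Finset.range Ys.length \ Δ.pos q) Ys,
        v y = u (γ y) := CLP.map_congr_of_eq hargsEq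
    -- analyze the constraint of Q₁'
    have hXX : ∀ x ∈ Xs, u (γ x) = v' x := by
      have h1 := hu.1.2
      rw [show (r.rename γ).hargs = Xs.map (fun x (w : ℕ → D) => w (γ x)) from by
        rw [hr]; show (Xs.map CLP.varT).map (fun t w => t (w ∘ γ)) = _
        rw [List.map_map]; rfl] at h1
      rw [show (CLP.constQ p Xs v' : CLP.Query ℕ D Pr).args
          = Xs.map (fun x (_ : ℕ → D) => v' x) from rfl] at h1
      rw [List.zip_map'] at h1
      intro x hx
      exact h1 _ (List.mem_map.2 ⟨x, hx, rfl⟩)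
    have hcu : c (fun x => u (γ x)) := hu.2.1
    -- the witness valuation
    refine ⟨fun x => if x ∈ Xs ∨ x ∈ Ys ∨ x ∈ L then u (γ x) else v' x, ?_, ?_⟩
    · intro x hx1 hx2
      show (if x ∈ Xs ∨ x ∈ Ys ∨ x ∈ L then u (γ x) else v' x) = v' x
      by_cases hxX : x ∈ Xs
      · rw [if_pos (Or.inl hxX)]
        exact hXX x hxX
      · by_cases hxY : x ∈ Ys
        · rw [if_pos (Or.inr (Or.inl hxY))]
          obtain ⟨i, hi, rfl⟩ := List.mem_iff_getElem.1 hxY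
          have hiτ : i ∉ Δ.pos q := fun h => hx1 (CLP.mem_projArgs.2 ⟨i, h, hi, rfl⟩)
          have hmem : Ys[i] ∈ CLP.projArgs (Finset.range Ys.length \ Δ.pos q) Ys :=
            CLP.mem_projArgs.2 ⟨i, by simp [hi, hiτ], hi, rfl⟩
          rw [← hstar _ hmem]
          have hnp : Ys[i] ∉ CLP.projArgs (Δ.pos p) Xs :=
            fun h => hxX (CLP.mem_of_mem_projArgs h)
          exact (hv' _ hnp).symm
        · rw [if_neg]
          push_neg
          exact ⟨hxX, hxY, fun h => hx2 (Finset.mem_coe.2 h)⟩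
    · refine (hsupp _ (fun x => u (γ x)) ?_).2 hcu
      intro x hx
      show (if x ∈ Xs ∨ x ∈ Ys ∨ x ∈ L then u (γ x) else v' x) = u (γ x)
      simp only [Set.mem_union, Finset.coe_sort_coe, List.coe_toFinset, Set.mem_setOf_eq,
        Finset.mem_coe, List.mem_toFinset] at hx
      rw [if_pos (by tauto)]
  · -- DNlog2
    intro v hcv
    have H := hdn _ _ (CLP.constQ_finSupp p Xs v) (hstep v hcv)
    have hconstr : CLP.stepCns r (CLP.constQ p Xs v) v := CLP.stepCns_const_self v hcv
    have hA : (⟨q, (CLP.projArgs (Δ.pos q) Ys).map v⟩ : CLP.Atom D Pr)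
        ∈ ((⟨q, Ys.map CLP.varT, CLP.stepCns r (CLP.constQ p Xs v)⟩ :
            CLP.Query ℕ D Pr).proj Δ.pos).descSet := by
      refine ⟨v, hconstr, ?_⟩
      simp only [CLP.Query.proj, CLP.projArgs_map, List.map_map]
      rfl
    obtain ⟨w, hwc, hAeq⟩ := H.1 hA
    have hargsEq := congrArg CLP.Atom.args hAeq
    simp only at hargsEq
    refine ⟨w, ?_, ?_, hwc⟩
    · have := congrArg List.length hargsEq
      simpa using this
    · exact CLP.zip_of_map_eq (f := fun t : CLP.Trm ℕ D => t v)
        (g := fun t : CLP.Trm ℕ D => t w)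
        (by rw [List.map_map]; exact hargsEq)
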